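/- For every real μ, every real σ > 0, and every real η⁻, the integral ∫_{-∞}^{∞} x · (1/(σ√(2π))) · exp(−(x − μ)²/(2σ²)) · ( η⁻ + 2(1 − η⁻) · Φ((x − μ)/σ) ) dx equals μ + σ · (1 − η⁻)/√π, where Φ denotes the standard normal cumulative distribution function Φ(t) = ∫_{-∞}^{t} (1/√(2π)) exp(−y²/2) dy. (In the paper's terminology: the effective average fitness after linear ranking selection applied to a Gaussian fitness distribution with mean μ and variance σ² is M* = σ·S_R(η⁻) + μ, with S_R(η⁻) = (1 − η⁻)/√π.) -/

import Mathlib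

open Real MeasureTheory Filter Set Topology

noncomputable def stdNormalCdf (t : ℝ) : ℝ :=
  ∫ y in Set.Iic t, (1 / Real.sqrt (2 * Real.pi)) * Real.exp (-y ^ 2 / 2)

namespace EffAvg

noncomputable def g (t : ℝ) : ℝ := (1 / Real.sqrt (2 * Real.pi)) * Real.exp (-t ^ 2 / 2)

lemma g_cont : Continuous g := by
  unfold g; fun_prop

lemma g_nonneg (t : ℝ) : 0 ≤ g t :=
  mul_nonneg (by positivity) (Real.exp_pos _).le

lemma g_alt : g = fun t : ℝ => (1 / Real.sqrt (2 * Real.pi)) * Real.exp (-(1/2 : ℝ) * t ^ 2) := by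
  funext t; unfold g; congr 1; ring

lemma g_int : Integrable g := by
  rw [g_alt]
  exact (integrable_exp_neg_mul_sq (by norm_num : (0:ℝ) < 1/2)).const_mul _

lemma tg_int : Integrable (fun t : ℝ => t * g t) := by
  have h := (integrable_mul_exp_neg_mul_sq (by norm_num : (0:ℝ) < 1/2)).const_mul
    (1 / Real.sqrt (2 * Real.pi))
  refine h.congr (Eventually.of_forall fun t => ?_)
  show 1 / Real.sqrt (2 * π) * (t * Real.exp (-(1/2 : ℝ) * t ^ 2)) = t * g t
  unfold g; rw [show -(1/2 : ℝ) * t ^ 2 = -t ^ 2 / 2 by ring]; ring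

lemma g_integral : ∫ t : ℝ, g t = 1 := by
  rw [g_alt, integral_const_mul, integral_gaussian,
    show ((π : ℝ) / (1/2)) = 2 * π by ring]
  have h : Real.sqrt (2 * π) ≠ 0 := by positivity
  field_simp

lemma Φ_eq (t : ℝ) : stdNormalCdf t = stdNormalCdf 0 + ∫ y in (0:ℝ)..t, g y := by
  have h := intervalIntegral.integral_Iic_sub_Iic (f := g) (μ := volume)
    (a := 0) (b := t) g_int.integrableOn g_int.integrableOn
  have h0 : stdNormalCdf t = ∫ y in Set.Iic t, g y := rfl
  have h1 : stdNormalCdf 0 = ∫ y in Set.Iic (0:ℝ), g y := rfl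
  rw [h0, h1]; linarith

lemma Φ_deriv (t : ℝ) : HasDerivAt stdNormalCdf (g t) t := by
  have h : HasDerivAt (fun u : ℝ => stdNormalCdf 0 + ∫ y in (0:ℝ)..u, g y) (g t) t :=
    (intervalIntegral.integral_hasDerivAt_right g_int.intervalIntegrable
      g_cont.stronglyMeasurable.stronglyMeasurableAtFilter
      g_cont.continuousAt).const_add _
  exact h.congr_of_eventuallyEq (Eventually.of_forall fun u => Φ_eq u)

lemma Φ_cont : Continuous stdNormalCdf :=
  continuous_iff_continuousAt.2 fun t => (Φ_deriv t).continuousAt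

lemma Φ_nonneg (t : ℝ) : 0 ≤ stdNormalCdf t :=
  setIntegral_nonneg measurableSet_Iic fun y _ => g_nonneg y

lemma Φ_le_one (t : ℝ) : stdNormalCdf t ≤ 1 := by
  rw [← g_integral]
  exact setIntegral_le_integral g_int (Eventually.of_forall g_nonneg)

lemma Φ_atTop : Tendsto stdNormalCdf atTop (𝓝 1) := by
  have h := (aecover_Iic (μ := volume) (l := atTop)
    (tendsto_id : Tendsto (id : ℝ → ℝ) atTop atTop)).integral_tendsto_of_countably_generated g_int
  rw [g_integral] at h
  exact h

lemma Φ_atBot : Tendsto stdNormalCdf atBot (𝓝 0) := by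
  have h1 : Tendsto (fun t : ℝ => ∫ x in Set.Ioi t, g x) atBot (𝓝 (∫ x, g x)) :=
    (aecover_Ioi (μ := volume) (l := atBot)
      (tendsto_id : Tendsto (id : ℝ → ℝ) atBot atBot)).integral_tendsto_of_countably_generated g_int
  have h2 : ∀ t : ℝ, stdNormalCdf t = (∫ x, g x) - ∫ x in Set.Ioi t, g x := by
    intro t
    have h3 : (∫ x in Set.Iic t, g x) + (∫ x in Set.Ioi t, g x) = ∫ x, g x := by
      rw [← setIntegral_union (Iic_disjoint_Ioi le_rfl) measurableSet_Ioi
        g_int.integrableOn g_int.integrableOn, Set.Iic_union_Ioi, setIntegral_univ]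
    have h0 : stdNormalCdf t = ∫ y in Set.Iic t, g y := rfl
    rw [h0]; linarith
  have h4 := (tendsto_const_nhds (x := ∫ x : ℝ, g x) (f := atBot)).sub h1
  rw [sub_self] at h4
  exact h4.congr fun t => (h2 t).symm

lemma sq_atBot : Tendsto (fun t : ℝ => t ^ 2) atBot atTop := by
  have h1 : Tendsto (fun t : ℝ => -t) atBot atTop := tendsto_neg_atBot_atTop
  have h0 : Tendsto (fun x : ℝ => x ^ 2) atTop atTop :=
    tendsto_pow_atTop (by norm_num : (2:ℕ) ≠ 0)
  have h2 : Tendsto (fun t : ℝ => (-t) ^ 2) atBot atTop := h0.comp h1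
  refine h2.congr fun t => ?_
  ring

lemma g_tendsto_zero {l : Filter ℝ} (hl : Tendsto (fun t : ℝ => t ^ 2) l atTop) :
    Tendsto g l (𝓝 0) := by
  have h1 : Tendsto (fun t : ℝ => -t ^ 2 / 2) l atBot := by
    apply Tendsto.atBot_div_const (by norm_num : (0:ℝ) < 2)
    exact tendsto_neg_atTop_atBot.comp hl
  have h2 : Tendsto (fun t : ℝ => Real.exp (-t ^ 2 / 2)) l (𝓝 0) :=
    Real.tendsto_exp_atBot.comp h1
  have h3 := h2.const_mul (1 / Real.sqrt (2 * π))
  rw [mul_zero] at h3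
  exact h3

lemma g_atTop : Tendsto g atTop (𝓝 0) := g_tendsto_zero (tendsto_pow_atTop (by norm_num : (2:ℕ) ≠ 0))
lemma g_atBot : Tendsto g atBot (𝓝 0) := g_tendsto_zero sq_atBot

lemma g_hasDeriv (t : ℝ) : HasDerivAt g (-t * g t) t := by
  have h1 : HasDerivAt (fun u : ℝ => -u ^ 2 / 2) (-t) t := by
    have h := ((hasDerivAt_pow 2 t).neg).div_const 2
    exact h.congr_deriv (by push_cast; ring)
  have h2 := (h1.exp).const_mul (1 / Real.sqrt (2 * π))
  exact h2.congr_deriv (by unfold g; ring)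

lemma I2 : ∫ t : ℝ, t * g t = 0 := by
  have h := integral_of_hasDerivAt_of_tendsto (f := fun t : ℝ => -g t)
    (f' := fun t : ℝ => t * g t) (fun t => by have h' := (g_hasDeriv t).neg; simp only [neg_mul, neg_neg] at h'; exact h')
    tg_int (by simpa using g_atBot.neg) (by simpa using g_atTop.neg)
  simpa using h

lemma gΦ_int : Integrable (fun t : ℝ => g t * stdNormalCdf t) := by
  refine g_int.mono' ((g_cont.mul Φ_cont).aestronglyMeasurable) ?_
  refine Eventually.of_forall fun t => ?_
  rw [Real.norm_eq_abs, abs_mul, abs_of_nonneg (g_nonneg t), abs_of_nonneg (Φ_nonneg t)]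
  calc g t * stdNormalCdf t ≤ g t * 1 := by
        exact mul_le_mul_of_nonneg_left (Φ_le_one t) (g_nonneg t)
    _ = g t := mul_one _

lemma I3 : ∫ t : ℝ, g t * stdNormalCdf t = 1 / 2 := by
  have hderiv : ∀ t : ℝ, HasDerivAt (fun u : ℝ => stdNormalCdf u ^ 2 / 2)
      (g t * stdNormalCdf t) t := by
    intro t
    have h := ((Φ_deriv t).pow 2).div_const 2
    exact h.congr_deriv (by push_cast; ring)
  have hbot : Tendsto (fun t : ℝ => stdNormalCdf t ^ 2 / 2) atBot (𝓝 0) := by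
    have := (Φ_atBot.pow 2).div_const 2
    simpa using this
  have htop : Tendsto (fun t : ℝ => stdNormalCdf t ^ 2 / 2) atTop (𝓝 (1/2)) := by
    have := (Φ_atTop.pow 2).div_const 2
    simpa using this
  have h := integral_of_hasDerivAt_of_tendsto hderiv gΦ_int hbot htop
  simpa using h

lemma g_sq (t : ℝ) : g t ^ 2 = (1 / Real.sqrt (2 * π)) ^ 2 * Real.exp (-(1:ℝ) * t ^ 2) := by
  have h : (-t ^ 2 / 2) + (-t ^ 2 / 2) = -(1:ℝ) * t ^ 2 := by ring
  unfold g
  rw [mul_pow, sq (Real.exp _), ← Real.exp_add, h]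

lemma gsq_int : Integrable (fun t : ℝ => g t ^ 2) := by
  have h := (integrable_exp_neg_mul_sq (by norm_num : (0:ℝ) < 1)).const_mul
    ((1 / Real.sqrt (2 * π)) ^ 2)
  exact h.congr (Eventually.of_forall fun t => (g_sq t).symm)

lemma gsq_integral : ∫ t : ℝ, g t ^ 2 = Real.sqrt π / (2 * π) := by
  have h : (fun t : ℝ => g t ^ 2)
      = fun t : ℝ => ((1 / Real.sqrt (2 * π)) ^ 2) * Real.exp (-(1:ℝ) * t ^ 2) :=
    funext g_sq
  rw [h, integral_const_mul, integral_gaussian]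
  have h2 : Real.sqrt (2 * π) ^ 2 = 2 * π := Real.sq_sqrt (by positivity)
  rw [div_pow, one_pow, h2]
  rw [show (π : ℝ) / 1 = π by ring]
  ring

lemma tgΦ_int : Integrable (fun t : ℝ => t * g t * stdNormalCdf t) := by
  refine tg_int.abs.mono' ?_ ?_
  · exact ((continuous_id.mul g_cont).mul Φ_cont).aestronglyMeasurable
  refine Eventually.of_forall fun t => ?_
  rw [Real.norm_eq_abs, abs_mul, abs_of_nonneg (Φ_nonneg t)]
  calc |t * g t| * stdNormalCdf t ≤ |t * g t| * 1 :=
        mul_le_mul_of_nonneg_left (Φ_le_one t) (abs_nonneg _)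
    _ = |t * g t| := mul_one _

lemma gΦ_tendsto_zero {l : Filter ℝ} (hg : Tendsto g l (𝓝 0)) :
    Tendsto (fun t : ℝ => g t * stdNormalCdf t) l (𝓝 0) := by
  refine squeeze_zero_norm (fun t => ?_) hg
  rw [Real.norm_eq_abs, abs_mul, abs_of_nonneg (g_nonneg t), abs_of_nonneg (Φ_nonneg t)]
  calc g t * stdNormalCdf t ≤ g t * 1 :=
        mul_le_mul_of_nonneg_left (Φ_le_one t) (g_nonneg t)
    _ = g t := mul_one _

lemma I4 : ∫ t : ℝ, t * g t * stdNormalCdf t = Real.sqrt π / (2 * π) := by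
  have hderiv : ∀ t : ℝ, HasDerivAt (fun u : ℝ => -(g u * stdNormalCdf u))
      (t * g t * stdNormalCdf t - g t ^ 2) t := by
    intro t
    have h := ((g_hasDeriv t).mul (Φ_deriv t)).neg
    exact h.congr_deriv (by ring)
  have hint : Integrable (fun t : ℝ => t * g t * stdNormalCdf t - g t ^ 2) :=
    tgΦ_int.sub gsq_int
  have hbot : Tendsto (fun t : ℝ => -(g t * stdNormalCdf t)) atBot (𝓝 0) := by
    simpa using (gΦ_tendsto_zero g_atBot).neg
  have htop : Tendsto (fun t : ℝ => -(g t * stdNormalCdf t)) atTop (𝓝 0) := by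
    simpa using (gΦ_tendsto_zero g_atTop).neg
  have h := integral_of_hasDerivAt_of_tendsto hderiv hint hbot htop
  rw [integral_sub tgΦ_int gsq_int, sub_zero] at h
  have h2 : ∫ t : ℝ, t * g t * stdNormalCdf t = ∫ t : ℝ, g t ^ 2 := by linarith
  rw [h2, gsq_integral]

lemma main_integral (μ σ η : ℝ) :
    ∫ t : ℝ, (μ + σ * t) * g t * (η + 2 * (1 - η) * stdNormalCdf t)
      = μ + σ * ((1 - η) / Real.sqrt π) := by
  have hrw : (fun t : ℝ => (μ + σ * t) * g t * (η + 2 * (1 - η) * stdNormalCdf t))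
      = fun t : ℝ => (μ * η) * g t + ((2 * μ * (1 - η)) * (g t * stdNormalCdf t)
        + ((σ * η) * (t * g t) + (2 * σ * (1 - η)) * (t * g t * stdNormalCdf t))) := by
    funext t; ring
  have hf1 : Integrable (fun t : ℝ => (μ * η) * g t) := g_int.const_mul _
  have hf2 : Integrable (fun t : ℝ => (2 * μ * (1 - η)) * (g t * stdNormalCdf t)) :=
    gΦ_int.const_mul _
  have hf3 : Integrable (fun t : ℝ => (σ * η) * (t * g t)) := tg_int.const_mul _
  have hf4 : Integrable (fun t : ℝ => (2 * σ * (1 - η)) * (t * g t * stdNormalCdf t)) :=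
    tgΦ_int.const_mul _
  have hf34 : Integrable (fun t : ℝ => (σ * η) * (t * g t)
      + (2 * σ * (1 - η)) * (t * g t * stdNormalCdf t)) := hf3.add hf4
  have hf234 : Integrable (fun t : ℝ => (2 * μ * (1 - η)) * (g t * stdNormalCdf t)
      + ((σ * η) * (t * g t) + (2 * σ * (1 - η)) * (t * g t * stdNormalCdf t))) :=
    hf2.add hf34
  rw [hrw, integral_add hf1 hf234, integral_add hf2 hf34, integral_add hf3 hf4,
    integral_const_mul, integral_const_mul, integral_const_mul, integral_const_mul]
  rw [g_integral, I2, I3, I4]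
  have hπ : Real.sqrt π ^ 2 = π := Real.sq_sqrt Real.pi_pos.le
  have hπ' : Real.sqrt π ≠ 0 := by positivity
  have key : Real.sqrt π / (2 * π) = 1 / (2 * Real.sqrt π) := by
    rw [div_eq_div_iff (by positivity) (by positivity)]; linear_combination 2 * hπ
  rw [key]; field_simp; linarith [hπ]

end EffAvg

theorem effective_average_fitness_linear_ranking (μ σ η : ℝ) (hσ : 0 < σ) :
    (∫ x : ℝ, x * ((1 / (σ * Real.sqrt (2 * Real.pi))) *
          Real.exp (-(x - μ) ^ 2 / (2 * σ ^ 2))) *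
        (η + 2 * (1 - η) * stdNormalCdf ((x - μ) / σ)))
      = μ + σ * ((1 - η) / Real.sqrt Real.pi) := by
  have hσ' : σ ≠ 0 := hσ.ne'
  set G : ℝ → ℝ := fun t => σ⁻¹ * ((μ + σ * t) * EffAvg.g t * (η + 2 * (1 - η) * stdNormalCdf t))
    with hG
  have step1 : (fun x : ℝ => x * ((1 / (σ * Real.sqrt (2 * Real.pi))) *
        Real.exp (-(x - μ) ^ 2 / (2 * σ ^ 2))) *
        (η + 2 * (1 - η) * stdNormalCdf ((x - μ) / σ)))
      = fun x : ℝ => G ((x - μ) / σ) := by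
    funext x
    show x * ((1 / (σ * Real.sqrt (2 * Real.pi))) *
          Real.exp (-(x - μ) ^ 2 / (2 * σ ^ 2))) *
        (η + 2 * (1 - η) * stdNormalCdf ((x - μ) / σ))
      = σ⁻¹ * ((μ + σ * ((x - μ) / σ)) * EffAvg.g ((x - μ) / σ)
        * (η + 2 * (1 - η) * stdNormalCdf ((x - μ) / σ)))
    have h1 : μ + σ * ((x - μ) / σ) = x := by field_simp; ring
    have h2 : -((x - μ) / σ) ^ 2 / 2 = -(x - μ) ^ 2 / (2 * σ ^ 2) := by
      rw [div_pow]; ring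
    unfold EffAvg.g
    rw [h1, h2, one_div, one_div, mul_inv]
    ring
  rw [step1]
  have step2 : (∫ x : ℝ, G ((x - μ) / σ)) = ∫ x : ℝ, (fun y => G (y / σ)) (x - μ) := rfl
  rw [step2, integral_sub_right_eq_self (fun y => G (y / σ)) μ,
    MeasureTheory.Measure.integral_comp_div G σ]
  rw [abs_of_pos hσ, smul_eq_mul, hG]
  rw [integral_const_mul, ← mul_assoc, mul_inv_cancel₀ hσ', one_mul]
  exact EffAvg.main_integral μ σ η
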